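/- Let H be a finite C-group with commutator subgroup H', let p be a prime not dividing |H'|, and let P = ⟨x⟩ be a Sylow p-subgroup of H. Let q be a prime and S the Sylow q-subgroup of H' (which is normal in H), and suppose conjugation by x induces an automorphism of S of order p^c with c ≥ 1. Then: (i) for every automorphism β of H there exists an integer t with β(x)H' = x^t H', and every such t satisfies t ≡ 1 (mod p^c); (ii) consequently, for every abelian group M and every group homomorphism σ : H → M with σ(x)^{p^c} = 1, one has σ(β(x)) = σ(x) for all automorphisms β of H. -/

import Mathlib

open Pointwise

/-- Any two automorphisms of a cyclic group commute. -/
lemma mulAut_mul_comm_of_isCyclic {G : Type*} [Group G] [IsCyclic G] (a b : MulAut G) :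
    a * b = b * a := by
  obtain ⟨g, hg⟩ := IsCyclic.exists_generator (α := G)
  have key : a (b g) = b (a g) := by
    obtain ⟨m, hm⟩ := Subgroup.mem_zpowers_iff.mp (hg (b g))
    obtain ⟨k, hk⟩ := Subgroup.mem_zpowers_iff.mp (hg (a g))
    rw [← hm, ← hk, map_zpow, map_zpow, ← hk, ← hm, ← zpow_mul, ← zpow_mul, mul_comm]
  ext y
  obtain ⟨n, rfl⟩ := Subgroup.mem_zpowers_iff.mp (hg y)
  simp only [MulAut.mul_apply, map_zpow, key]

/-- The automorphism of a subgroup `S` induced by conjugation `y ↦ x⁻¹ * y * x` by an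
element `x` normalizing `S`. -/
def conjOn {H : Type*} [Group H] (S : Subgroup H) (x : H) (hx : x ∈ Subgroup.normalizer (S : Set H)) :
    MulAut ↥S where
  toFun y := ⟨x⁻¹ * ↑y * x, by
    refine (Subgroup.mem_normalizer_iff.mp hx _).mpr ?_
    have : x * (x⁻¹ * ↑y * x) * x⁻¹ = (y : H) := by group
    rw [this]; exact y.2⟩
  invFun y := ⟨x * ↑y * x⁻¹, (Subgroup.mem_normalizer_iff.mp hx _).mp y.2⟩
  left_inv y := by ext; simp; group
  right_inv y := by ext; simp; group
  map_mul' y z := by ext; simp; group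

/-- A Sylow `q`-subgroup of the commutator subgroup `H'`, viewed as a subgroup of `H`. -/
def sylowOfCommutator {H : Type*} [Group H] (q : ℕ) (S : Sylow q ↥(commutator H)) :
    Subgroup H :=
  (S : Subgroup ↥(commutator H)).map (commutator H).subtype

/-- Let `H` be a finite C-group with commutator subgroup `H'`, `p` a prime
not dividing `|H'|`, and `P = ⟨x⟩` a Sylow `p`-subgroup. Let `q` be a prime and `S` the Sylow
`q`-subgroup of `H'` (normal in `H`), and suppose conjugation by `x` induces an automorphism
of `S` of order `p^c`, `c ≥ 1`. Then (i) for every automorphism `β` of `H` there is an integer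
`t` with `β(x)H' = x^t H'`, and every such `t` satisfies `t ≡ 1 (mod p^c)`; (ii) for every
abelian group `M` and homomorphism `σ : H → M` with `σ(x)^(p^c) = 1` one has
`σ(β(x)) = σ(x)` for all automorphisms `β` of `H`. -/
theorem aut_acts_trivially_on_acting_sylow {H : Type*} [Group H] [Finite H]
    (hC : ∀ (r : ℕ), r.Prime → ∀ P : Sylow r H, IsCyclic ↥P)
    (p : ℕ) (hp : p.Prime) (hpnd : ¬ p ∣ Nat.card ↥(commutator H))
    (x : H) (P : Sylow p H) (hP : (P : Subgroup H) = Subgroup.zpowers x)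
    (q : ℕ) (hq : q.Prime) (S : Sylow q ↥(commutator H))
    (hSnormal : (sylowOfCommutator q S).Normal)
    (hx : x ∈ Subgroup.normalizer (sylowOfCommutator q S : Set H))
    (c : ℕ) (hc : 1 ≤ c)
    (hconj : orderOf (conjOn (sylowOfCommutator q S) x hx) = p ^ c) :
    (∀ β : MulAut H,
      (∃ t : ℤ, Abelianization.of (β x) = Abelianization.of x ^ t) ∧
      (∀ t : ℤ, Abelianization.of (β x) = Abelianization.of x ^ t →
        t ≡ 1 [ZMOD ((p ^ c : ℕ) : ℤ)])) ∧
    (∀ (M : Type*) [CommGroup M] (σ : H →* M), σ x ^ (p ^ c) = 1 →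
      ∀ β : MulAut H, σ (β x) = σ x) := by
  classical
  haveI := Fact.mk hp
  haveI := Fact.mk hq
  set N := sylowOfCommutator q S with hNdef
  haveI hNnorm : N.Normal := hSnormal
  -- `N` is cyclic
  haveI hNcyc : IsCyclic ↥N := by
    obtain ⟨Q, hQ⟩ := (S.isPGroup'.map (commutator H).subtype).exists_le_sylow
    haveI : IsCyclic ↥(Q : Subgroup H) := hC q hq Q
    exact isCyclic_of_surjective (Subgroup.subgroupOfEquivOfLe hQ) (MulEquiv.surjective _)
  -- `N` is characteristic in `H`
  haveI hNchar : N.Characteristic := by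
    haveI hSn : (S : Subgroup ↥(commutator H)).Normal := by
      have h1 : (S : Subgroup ↥(commutator H)) = N.subgroupOf (commutator H) := by
        rw [Subgroup.subgroupOf, hNdef, sylowOfCommutator,
          Subgroup.comap_map_eq_self_of_injective (commutator H).subtype_injective]
      rw [h1]
      exact hNnorm.subgroupOf _
    have hSchar : (S : Subgroup ↥(commutator H)).Characteristic :=
      Sylow.characteristic_of_normal S hSn
    rw [Subgroup.characteristic_iff_le_comap]
    intro β y hy
    obtain ⟨s, hs, rfl⟩ := hy
    have hKmap : (commutator H).map (β : H →* H) = commutator H :=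
      Subgroup.characteristic_iff_map_eq.mp inferInstance β
    let βK : ↥(commutator H) ≃* ↥(commutator H) :=
      (β.subgroupMap (commutator H)).trans (MulEquiv.subgroupCongr hKmap)
    have hβKs : βK s ∈ (S : Subgroup ↥(commutator H)) :=
      Subgroup.characteristic_iff_le_comap.mp hSchar βK hs
    have hco : β ((commutator H).subtype s) = (commutator H).subtype (βK s) := rfl
    rw [Subgroup.mem_comap]
    exact ⟨βK s, hβKs, hco.symm⟩
  -- order of the conjugation automorphism
  have hφx : orderOf (MulAut.conjNormal x : MulAut ↥N) = p ^ c := by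
    have h1 : conjOn N x hx = (MulAut.conjNormal x : MulAut ↥N)⁻¹ := by
      ext y
      simp [conjOn, mul_assoc]
    rw [h1, orderOf_inv] at hconj
    exact hconj
  -- conjugation by `β x` equals conjugation by `x` on `N`
  have hφβ : ∀ β : MulAut H,
      MulAut.conjNormal (β x) = (MulAut.conjNormal x : MulAut ↥N) := by
    intro β
    have hNmap : N.map (β : H →* H) = N := Subgroup.characteristic_iff_map_eq.mp hNchar β
    let e : ↥N ≃* ↥N := (β.subgroupMap N).trans (MulEquiv.subgroupCongr hNmap)
    have hcoe : ∀ y : ↥N, (e y : H) = β y := fun y => rfl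
    have hkey : (MulAut.conjNormal (β x) : MulAut ↥N) * e = e * MulAut.conjNormal x := by
      ext y
      simp only [MulAut.mul_apply, MulAut.conjNormal_apply, hcoe, map_mul, map_inv]
    rw [mulAut_mul_comm_of_isCyclic e _] at hkey
    exact mul_right_cancel hkey
  -- part (i)
  have main : ∀ β : MulAut H,
      (∃ t : ℤ, Abelianization.of (β x) = Abelianization.of x ^ t) ∧
      (∀ t : ℤ, Abelianization.of (β x) = Abelianization.of x ^ t →
        t ≡ 1 [ZMOD ((p ^ c : ℕ) : ℤ)]) := by
    intro β
    constructor
    · -- existence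
      obtain ⟨g, hg⟩ := MulAction.exists_smul_eq H P (β • P)
      have hx1 : β x ∈ MulAut.conj g • (P : Subgroup H) := by
        have h0 : ((g • P : Sylow p H) : Subgroup H) = MulAut.conj g • (P : Subgroup H) := rfl
        rw [← h0, hg]
        show β x ∈ β • (P : Subgroup H)
        rw [Subgroup.mem_pointwise_smul_iff_inv_smul_mem]
        have hββ : β⁻¹ • β x = x := by simp [MulAut.smul_def]
        rw [hββ, hP]
        exact Subgroup.mem_zpowers x
      rw [Subgroup.mem_pointwise_smul_iff_inv_smul_mem] at hx1
      have hx2 : g⁻¹ * β x * g ∈ Subgroup.zpowers x := by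
        rw [← hP]
        have hcg : (MulAut.conj g)⁻¹ • β x = g⁻¹ * β x * g := by
          simp [MulAut.smul_def, mul_assoc]
        rwa [hcg] at hx1
      obtain ⟨t, ht⟩ := Subgroup.mem_zpowers_iff.mp hx2
      refine ⟨t, ?_⟩
      have hb : β x = g * x ^ t * g⁻¹ := by rw [ht]; group
      rw [hb, map_mul, map_mul, map_zpow, map_inv, mul_comm (Abelianization.of g), mul_assoc,
        mul_inv_cancel, mul_one]
    · -- congruence
      intro t ht
      have hh : x ^ (-t) * β x ∈ commutator H := by
        have h1 : (Abelianization.of (x ^ (-t) * β x) : Abelianization H) = 1 := by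
          rw [map_mul, map_zpow, ht, ← zpow_add]
          simp
        exact (QuotientGroup.eq_one_iff _).mp h1
      set A : MulAut ↥N := MulAut.conjNormal x with hA
      set B : MulAut ↥N := MulAut.conjNormal (x ^ (-t) * β x) with hB
      have hbx : β x = x ^ t * (x ^ (-t) * β x) := by group
      have heq : A ^ t * B = A := by
        rw [hA, hB, ← map_zpow, ← map_mul, ← hbx, hφβ β]
      have hBA : B = A ^ (-t) * A := by
        rw [zpow_neg]
        exact eq_inv_mul_iff_mul_eq.mpr heq
      have hApc : A ^ (p ^ c) = 1 := by rw [← hφx]; exact pow_orderOf_eq_one A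
      have hBpc : B ^ (p ^ c) = 1 := by
        have h1 : B = A ^ (-t + 1) := by rw [zpow_add, zpow_one, hBA]
        rw [h1, ← zpow_natCast (A ^ (-t + 1)) (p ^ c), ← zpow_mul, mul_comm, zpow_mul,
          zpow_natCast, hApc, one_zpow]
      have hdvd1 : orderOf B ∣ p ^ c := orderOf_dvd_of_pow_eq_one hBpc
      have hdvd2 : orderOf B ∣ Nat.card ↥(commutator H) :=
        (orderOf_map_dvd MulAut.conjNormal _).trans
          ((commutator H).orderOf_dvd_natCard hh)
      have hBord : orderOf B = 1 := by
        obtain ⟨k, hk, hk2⟩ := (Nat.dvd_prime_pow hp).mp hdvd1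
        cases k with
        | zero => simpa using hk2
        | succ k =>
          exfalso
          apply hpnd
          refine dvd_trans ?_ hdvd2
          rw [hk2]
          exact dvd_pow_self p (Nat.succ_ne_zero k)
      have hBone : B = 1 := orderOf_eq_one_iff.mp hBord
      have hAt : A ^ (t - 1 : ℤ) = 1 := by
        rw [hBone, mul_one] at heq
        rw [zpow_sub, zpow_one, heq, mul_inv_cancel]
      have hdvd : ((p ^ c : ℕ) : ℤ) ∣ t - 1 := by
        rw [← hφx]
        exact orderOf_dvd_iff_zpow_eq_one.mpr hAt
      refine Int.ModEq.symm (Int.modEq_iff_dvd.mpr ?_)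
      rwa [show t - (1 : ℤ) = t - 1 by ring]
  refine ⟨main, ?_⟩
  -- part (ii)
  intro M _ σ hσ β
  obtain ⟨⟨t, ht⟩, hmod⟩ := main β
  have hmt := hmod t ht
  obtain ⟨k, hk⟩ := Int.modEq_iff_dvd.mp hmt
  have hσβ : σ (β x) = σ x ^ t := by
    have h1 : σ (β x) = Abelianization.lift σ (Abelianization.of (β x)) :=
      (Abelianization.lift_apply_of σ _).symm
    rw [h1, ht, map_zpow, Abelianization.lift_apply_of]
  have hxt : σ x ^ (((p ^ c : ℕ) : ℤ)) = 1 := by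
    rw [zpow_natCast]; exact hσ
  rw [hσβ, show (t : ℤ) = 1 - (1 - t) by ring, zpow_sub, zpow_one, hk, zpow_mul, hxt,
    one_zpow, inv_one, mul_one]
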